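/- Let w be a word of length n and 0 ≤ h ≤ ⌊(n-1)/2⌋. If there exists a letter a such that 2·|w[1..h]|_a > |w|_a, then for every h' ≥ h there also exists a letter b with 2·|w[1..h']|_b > |w|_b, and moreover h' cannot be the head length of any Abelian period of w. -/

import Mathlib

/-- A word `w` has Abelian period `(h, p)` if `w = u₀u₁⋯u_{k-1}u_k` where `|u₀| = h`,
all the middle blocks `u₁, …, u_{k-1}` have length `p` and the same Parikh vector,
the Parikh vectors of the head `u₀` and the tail `u_k` are contained in that common
Parikh vector, `h < p`, there is at least one middle block, and the tail has length
`< p`. -/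
def HasAbelianPeriod {α : Type*} [DecidableEq α] (w : List α) (h p : ℕ) : Prop :=
  h < p ∧ ∃ (u0 : List α) (us : List (List α)) (uk : List α),
    w = u0 ++ us.flatten ++ uk ∧
    u0.length = h ∧
    us ≠ [] ∧
    (∀ u ∈ us, u.length = p) ∧
    (∀ u ∈ us, ∀ v ∈ us, ∀ a : α, u.count a = v.count a) ∧
    (∀ u ∈ us, ∀ a : α, u0.count a ≤ u.count a) ∧
    (∀ u ∈ us, ∀ a : α, uk.count a ≤ u.count a) ∧
    uk.length < p

lemma count_take_mono' {α : Type*} [DecidableEq α] (w : List α) (a : α) {h h' : ℕ}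
    (hle : h ≤ h') : (w.take h).count a ≤ (w.take h').count a :=
  ((List.take_prefix_take_left hle : w.take h <+: w.take h').sublist).count_le a

/-- Let `w` be a word of length `n` and `0 ≤ h ≤ ⌊(n-1)/2⌋`. If there
exists a letter `a` such that `2·|w[1..h]|_a > |w|_a`, then for every `h' ≥ h` there
also exists a letter `b` with `2·|w[1..h']|_b > |w|_b`, and moreover `h'` cannot be
the head length of any Abelian period of `w`. -/
theorem no_head_of_large_prefix_count {α : Type*} [DecidableEq α]
    (w : List α) (n h : ℕ) (hn : w.length = n) (hh : h ≤ (n - 1) / 2)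
    (ha : ∃ a : α, w.count a < 2 * ((w.take h).count a)) :
    ∀ h', h ≤ h' →
      (∃ b : α, w.count b < 2 * ((w.take h').count b)) ∧
      (∀ p : ℕ, ¬ HasAbelianPeriod w h' p) := by
  obtain ⟨a, ha⟩ := ha
  intro h' hle
  have hb : w.count a < 2 * ((w.take h').count a) :=
    lt_of_lt_of_le ha (by have := count_take_mono' w a hle; omega)
  refine ⟨⟨a, hb⟩, ?_⟩
  rintro p ⟨-, u0, us, uk, hw, hlen, hne, -, -, hhead, -, -⟩
  obtain ⟨u, hu⟩ := List.exists_mem_of_ne_nil us hne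
  have htake : w.take h' = u0 := by
    rw [hw, List.append_assoc, ← hlen, List.take_left]
  have hflat : u0.count a ≤ us.flatten.count a := by
    calc u0.count a ≤ u.count a := hhead u hu a
    _ ≤ us.flatten.count a := by
        obtain ⟨s, t, rfl⟩ := List.append_of_mem hu
        simp [List.count_append]; omega
  have hcount : w.count a = u0.count a + us.flatten.count a + uk.count a := by
    rw [hw]; simp [List.count_append]; omega
  rw [htake] at hb
  omega
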